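/- Let P : ℕ → [0,1] be a probability mass function with P(k) = 0 for all k < d_⋆ for some integer d_⋆ ≥ 3, with finite mean m := Σ_k k·P(k) ∈ (0,∞) and finite second factorial moment, and set q(k) := k·P(k)/m (the size-biased law) and β_⋆ := atanh(1/(d_⋆ − 1)). For β > 0 define f_β : [0,∞] → [0,β] by f_β(h) = atanh( tanh(β)·tanh(h) ) (with f_β(∞) = β), and define the map Φ_β on Borel probability measures μ on [0,∞] by letting Φ_β(μ) be the law of Σ_{ℓ=1}^{K−1} f_β(h_ℓ), where K has law q and (h_ℓ)_{ℓ≥1} are i.i.d. with law μ, independent of K. Fix β ≥ β₀ > β_⋆ and suppose the iterates Φ_β^t(δ_∞) converge weakly as t → ∞ to a probability measure ν_β^+ on [0,∞], and likewise Φ_{β₀}^t(δ_∞) converge weakly to ν_{β₀}^+. Then for every initial probability measure μ₀ on [0,∞] that stochastically dominates ν_{β₀}^+ (i.e., μ₀([s,∞]) ≥ ν_{β₀}^+([s,∞]) for all s ≥ 0), the iterates Φ_β^t(μ₀) converge weakly to ν_β^+ as t → ∞. -/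

import Mathlib

open MeasureTheory Filter
open scoped ENNReal

/-- the belief-propagation update function `f_β : [0,∞] → [0,β]`,
`f_β(h) = atanh(tanh β · tanh h)`, with `f_β(∞) = β = atanh(tanh β)`. -/
noncomputable def bpFun (β : ℝ) (h : ℝ≥0∞) : ℝ≥0∞ :=
  if h = ⊤ then ENNReal.ofReal β
  else ENNReal.ofReal ((1 / 2) * Real.log
    ((1 + Real.tanh β * Real.tanh h.toReal) / (1 - Real.tanh β * Real.tanh h.toReal)))

/-- the belief-propagation map `Φ_β` on probability measures on `[0,∞]` : `Φ_β(μ)`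
is the law of `Σ_{ℓ=1}^{K-1} f_β(h_ℓ)`, where `K` has the size-biased law
`q(k) = k P(k)/m` and the `h_ℓ` are i.i.d. with law `μ`, independent of `K`. -/
noncomputable def bpMap (P : ℕ → ℝ) (m β : ℝ) (μ : Measure ℝ≥0∞) : Measure ℝ≥0∞ :=
  Measure.sum fun k : ℕ =>
    ENNReal.ofReal ((k : ℝ) * P k / m) •
      Measure.map (fun h : Fin (k - 1) → ℝ≥0∞ => ∑ ℓ, bpFun β (h ℓ))
        (Measure.pi fun _ => μ)

/-- weak convergence of a sequence of measures on `[0,∞]` : convergence of the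
integrals of every (automatically bounded) continuous function. -/
def WeakTendsto (μs : ℕ → Measure ℝ≥0∞) (ν : Measure ℝ≥0∞) : Prop :=
  ∀ g : ℝ≥0∞ → ℝ, Continuous g →
    Tendsto (fun t => ∫ x, g x ∂(μs t)) atTop (nhds (∫ x, g x ∂ν))

namespace BPaux


/-- the real BP function, parameterized by `θ = tanh β`. -/
noncomputable def L (θ x : ℝ) : ℝ :=
  (1 / 2) * Real.log ((1 + θ * Real.tanh x) / (1 - θ * Real.tanh x))

noncomputable def N (θ x : ℝ) : ℝ := (1 + θ) * Real.exp (2 * x) + (1 - θ)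
noncomputable def D (θ x : ℝ) : ℝ := (1 - θ) * Real.exp (2 * x) + (1 + θ)
noncomputable def L' (θ x : ℝ) : ℝ := 4 * θ * Real.exp (2 * x) / (N θ x * D θ x)

lemma tanh_exp (x : ℝ) :
    Real.tanh x = (Real.exp (2 * x) - 1) / (Real.exp (2 * x) + 1) := by
  have h1 : Real.exp (2 * x) = Real.exp x * Real.exp x := by
    rw [two_mul, Real.exp_add]
  have h2 : (0:ℝ) < Real.exp x := Real.exp_pos x
  rw [Real.tanh_eq_sinh_div_cosh, Real.sinh_eq, Real.cosh_eq, h1, Real.exp_neg]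
  rw [div_eq_div_iff (by positivity) (by positivity)]
  field_simp

lemma one_lt_exp_two {x : ℝ} (hx : 0 < x) : 1 < Real.exp (2 * x) := by
  rw [← Real.exp_zero]; exact Real.exp_lt_exp.2 (by linarith)

lemma one_le_exp_two {x : ℝ} (hx : 0 ≤ x) : 1 ≤ Real.exp (2 * x) := by
  rw [← Real.exp_zero]; exact Real.exp_le_exp.2 (by linarith)

lemma tanh_nonneg' {x : ℝ} (hx : 0 ≤ x) : 0 ≤ Real.tanh x := by
  rw [tanh_exp]
  have h1 := one_le_exp_two hx
  have h2 := Real.exp_pos (2 * x)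
  apply div_nonneg <;> linarith

lemma tanh_lt_one' (x : ℝ) : Real.tanh x < 1 := by
  rw [tanh_exp]
  have h2 := Real.exp_pos (2 * x)
  rw [div_lt_one (by linarith)]; linarith

lemma tanh_pos' {x : ℝ} (hx : 0 < x) : 0 < Real.tanh x := by
  rw [tanh_exp]
  have h1 := one_lt_exp_two hx
  apply div_pos <;> linarith

lemma tanh_mono' {x y : ℝ} (hxy : x ≤ y) : Real.tanh x ≤ Real.tanh y := by
  rw [tanh_exp, tanh_exp]
  have hx := Real.exp_pos (2 * x)
  have hy := Real.exp_pos (2 * y)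
  have hxy2 : Real.exp (2 * x) ≤ Real.exp (2 * y) := Real.exp_le_exp.2 (by linarith)
  rw [div_le_div_iff₀ (by linarith) (by linarith)]
  nlinarith

section theta
variable {θ : ℝ} (hθ : 0 < θ) (hθ1 : θ < 1)
include hθ hθ1

lemma N_pos (x : ℝ) : 0 < N θ x := by
  have := Real.exp_pos (2 * x); unfold N; nlinarith

lemma D_pos (x : ℝ) : 0 < D θ x := by
  have := Real.exp_pos (2 * x); unfold D; nlinarith

lemma num_pos {x : ℝ} (hx : 0 ≤ x) : 0 < 1 + θ * Real.tanh x := by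
  have h1 := tanh_nonneg' hx; nlinarith

lemma den_pos (x : ℝ) : 0 < 1 - θ * Real.tanh x := by
  have h1 := tanh_lt_one' x
  have h2 : -1 < Real.tanh x := by
    have := tanh_lt_one' (-x); rw [Real.tanh_neg] at this; linarith
  nlinarith

lemma ratio_eq (x : ℝ) :
    (1 + θ * Real.tanh x) / (1 - θ * Real.tanh x) = N θ x / D θ x := by
  have hE := Real.exp_pos (2 * x)
  have hden := den_pos hθ hθ1 x
  have hD := D_pos hθ hθ1 x
  rw [tanh_exp] at hden ⊢
  rw [div_eq_div_iff (by linarith) (by linarith)]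
  unfold N D
  field_simp
  ring

lemma L_eq (x : ℝ) : L θ x = (1 / 2) * (Real.log (N θ x) - Real.log (D θ x)) := by
  rw [L, ratio_eq hθ hθ1, Real.log_div (ne_of_gt (N_pos hθ hθ1 x)) (ne_of_gt (D_pos hθ hθ1 x))]

lemma hasDerivAt_L (x : ℝ) : HasDerivAt (L θ) (L' θ x) x := by
  have hE : HasDerivAt (fun y : ℝ => Real.exp (2 * y)) (2 * Real.exp (2 * x)) x := by
    simpa [mul_comm] using (HasDerivAt.exp (x := x) ((hasDerivAt_id x).const_mul 2))
  have hN : HasDerivAt (N θ) ((1 + θ) * (2 * Real.exp (2 * x))) x :=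
    (hE.const_mul (1 + θ)).add_const (1 - θ)
  have hD : HasDerivAt (D θ) ((1 - θ) * (2 * Real.exp (2 * x))) x :=
    (hE.const_mul (1 - θ)).add_const (1 + θ)
  have hlogN : HasDerivAt (fun y => Real.log (N θ y))
      ((1 + θ) * (2 * Real.exp (2 * x)) / (N θ x)) x :=
    hN.log (ne_of_gt (N_pos hθ hθ1 x))
  have hlogD : HasDerivAt (fun y => Real.log (D θ y))
      ((1 - θ) * (2 * Real.exp (2 * x)) / (D θ x)) x :=
    hD.log (ne_of_gt (D_pos hθ hθ1 x))
  have h := ((hlogN.sub hlogD).const_mul (1 / 2 : ℝ))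
  have heq : L θ = fun y => (1 / 2) * (Real.log (N θ y) - Real.log (D θ y)) :=
    funext fun y => L_eq hθ hθ1 y
  rw [heq]
  refine h.congr_deriv ?_
  have hNx := N_pos hθ hθ1 x
  have hDx := D_pos hθ hθ1 x
  unfold L' N D at *
  rw [div_sub_div _ _ hNx.ne' hDx.ne', ← mul_div_assoc]
  congr 1
  ring

lemma L'_pos (x : ℝ) : 0 < L' θ x := by
  have h1 := N_pos hθ hθ1 x
  have h2 := D_pos hθ hθ1 x
  have h3 := Real.exp_pos (2 * x)
  unfold L'; positivity

lemma continuous_L' : Continuous (L' θ) := by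
  apply Continuous.div
  · continuity
  · apply Continuous.mul
    · unfold N; continuity
    · unfold D; continuity
  · intro x
    exact ne_of_gt (mul_pos (N_pos hθ hθ1 x) (D_pos hθ hθ1 x))

lemma ND_eq (x : ℝ) :
    N θ x * D θ x = (1 - θ ^ 2) * (Real.exp (2 * x)) ^ 2
      + 2 * (1 + θ ^ 2) * Real.exp (2 * x) + (1 - θ ^ 2) := by
  unfold N D; ring

lemma L'_antitone {x y : ℝ} (hx : 0 ≤ x) (hxy : x ≤ y) : L' θ y ≤ L' θ x := by
  have ha := Real.exp_pos (2 * x)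
  have hb := Real.exp_pos (2 * y)
  have hab : Real.exp (2 * x) ≤ Real.exp (2 * y) := Real.exp_le_exp.2 (by linarith)
  have h1 : (1:ℝ) ≤ Real.exp (2 * x) := one_le_exp_two hx
  have hNx := N_pos hθ hθ1 x
  have hDx := D_pos hθ hθ1 x
  have hNy := N_pos hθ hθ1 y
  have hDy := D_pos hθ hθ1 y
  unfold L'
  rw [div_le_div_iff₀ (by positivity) (by positivity)]
  rw [ND_eq hθ hθ1, ND_eq hθ hθ1]
  have key : 0 ≤ (1 - θ ^ 2) * (Real.exp (2 * y) - Real.exp (2 * x))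
      * (Real.exp (2 * x) * Real.exp (2 * y) - 1) := by
    apply mul_nonneg (mul_nonneg (by nlinarith) (by linarith))
    nlinarith
  nlinarith [key, mul_pos ha hb]

lemma L'_strict_anti {x y : ℝ} (hx : 0 < x) (hxy : x < y) : L' θ y < L' θ x := by
  have ha := Real.exp_pos (2 * x)
  have hb := Real.exp_pos (2 * y)
  have hab : Real.exp (2 * x) < Real.exp (2 * y) := Real.exp_lt_exp.2 (by linarith)
  have h1 : (1:ℝ) < Real.exp (2 * x) := one_lt_exp_two hx
  have hNx := N_pos hθ hθ1 x
  have hDx := D_pos hθ hθ1 x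
  have hNy := N_pos hθ hθ1 y
  have hDy := D_pos hθ hθ1 y
  unfold L'
  rw [div_lt_div_iff₀ (by positivity) (by positivity)]
  rw [ND_eq hθ hθ1, ND_eq hθ hθ1]
  have key : 0 < (1 - θ ^ 2) * (Real.exp (2 * y) - Real.exp (2 * x))
      * (Real.exp (2 * x) * Real.exp (2 * y) - 1) := by
    apply mul_pos (mul_pos (by nlinarith) (by linarith))
    nlinarith
  nlinarith [key, mul_pos ha hb]

lemma L_zero : L θ 0 = 0 := by
  unfold L; simp [Real.tanh_zero]

lemma L_FTC {x : ℝ} (hx : 0 ≤ x) : L θ x = ∫ t in (0:ℝ)..x, L' θ t := by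
  have h := intervalIntegral.integral_eq_sub_of_hasDerivAt
    (f := L θ) (f' := L' θ) (a := (0:ℝ)) (b := x)
    (fun t _ => hasDerivAt_L hθ hθ1 t)
    ((continuous_L' hθ hθ1).intervalIntegrable 0 x)
  rw [h, L_zero hθ hθ1, sub_zero]

lemma L_nonneg {x : ℝ} (hx : 0 ≤ x) : 0 ≤ L θ x := by
  rw [L_FTC hθ hθ1 hx]
  apply intervalIntegral.integral_nonneg hx
  intro t _; exact le_of_lt (L'_pos hθ hθ1 t)

lemma L_mono {x y : ℝ} (hx : 0 ≤ x) (hxy : x ≤ y) : L θ x ≤ L θ y := by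
  rw [L_FTC hθ hθ1 hx, L_FTC hθ hθ1 (le_trans hx hxy)]
  apply intervalIntegral.integral_mono_interval (le_refl (0:ℝ)) hx hxy
  · filter_upwards with t using le_of_lt (L'_pos hθ hθ1 t)
  · exact (continuous_L' hθ hθ1).intervalIntegrable 0 y

lemma L_pos {x : ℝ} (hx : 0 < x) : 0 < L θ x := by
  rw [L_FTC hθ hθ1 (le_of_lt hx)]
  apply intervalIntegral.intervalIntegral_pos_of_pos_on
    ((continuous_L' hθ hθ1).intervalIntegrable 0 x)
    (fun t _ => L'_pos hθ hθ1 t) hx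

lemma mul_L'_lt_L {x : ℝ} (hx : 0 < x) : x * L' θ x < L θ x := by
  have hi1 : IntervalIntegrable (L' θ) MeasureTheory.volume 0 x :=
    (continuous_L' hθ hθ1).intervalIntegrable 0 x
  have hi2 : IntervalIntegrable (fun _ : ℝ => L' θ x) MeasureTheory.volume 0 x :=
    intervalIntegrable_const
  have hpos : 0 < ∫ t in (0:ℝ)..x, (L' θ t - L' θ x) := by
    apply intervalIntegral.intervalIntegral_pos_of_pos_on (hi1.sub hi2)
      (fun t ht => ?_) hx
    have := L'_strict_anti hθ hθ1 ht.1 ht.2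
    linarith
  rw [intervalIntegral.integral_sub hi1 hi2, intervalIntegral.integral_const] at hpos
  rw [L_FTC hθ hθ1 (le_of_lt hx)]
  simp only [sub_zero, smul_eq_mul] at hpos
  linarith

/-- `L` is monotone in `θ`. -/
lemma L_mono_theta {θ₀ x : ℝ} (hθ₀ : 0 < θ₀) (hθθ : θ₀ ≤ θ) (hx : 0 ≤ x) :
    L θ₀ x ≤ L θ x := by
  have hT0 := tanh_nonneg' hx
  have hT1 := tanh_lt_one' x
  have hd1 := den_pos hθ₀ (lt_of_le_of_lt hθθ hθ1) x
  have hd2 := den_pos hθ hθ1 x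
  have hn1 := num_pos hθ₀ (lt_of_le_of_lt hθθ hθ1) hx
  have hn2 := num_pos hθ hθ1 hx
  unfold L
  have hlog : Real.log ((1 + θ₀ * Real.tanh x) / (1 - θ₀ * Real.tanh x))
      ≤ Real.log ((1 + θ * Real.tanh x) / (1 - θ * Real.tanh x)) := by
    apply Real.log_le_log (by positivity)
    rw [div_le_div_iff₀ hd1 hd2]
    nlinarith
  linarith

omit hθ hθ1 in
/-- `L (tanh β) x ≤ β` for `x ≥ 0`, `β > 0`. -/
lemma L_le_beta {β x : ℝ} (hβ : 0 < β) (hx : 0 ≤ x) : L (Real.tanh β) x ≤ β := by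
  have hθp : 0 < Real.tanh β := tanh_pos' hβ
  have hθ1' : Real.tanh β < 1 := tanh_lt_one' β
  have hT0 := tanh_nonneg' hx
  have hT1 := tanh_lt_one' x
  have hd := den_pos hθp hθ1' x
  have hdβ : (0:ℝ) < 1 - Real.tanh β * Real.tanh β := by nlinarith
  have key : (1 + Real.tanh β * Real.tanh x) / (1 - Real.tanh β * Real.tanh x)
      ≤ Real.exp (2 * β) := by
    have hEβ := Real.exp_pos (2 * β)
    have hratio : (1 + Real.tanh β * Real.tanh x) / (1 - Real.tanh β * Real.tanh x)
        ≤ (1 + Real.tanh β) / (1 - Real.tanh β) := by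
      rw [div_le_div_iff₀ hd (by nlinarith)]
      nlinarith
    have hid : (1 + Real.tanh β) / (1 - Real.tanh β) = Real.exp (2 * β) := by
      rw [tanh_exp]
      have h1 := Real.exp_pos (2 * β)
      have h2 : Real.exp (2 * β) + 1 ≠ 0 := by positivity
      field_simp
      ring
    rw [← hid]; exact hratio
  unfold L
  have h2 : Real.log ((1 + Real.tanh β * Real.tanh x) / (1 - Real.tanh β * Real.tanh x))
      ≤ 2 * β := by
    calc Real.log ((1 + Real.tanh β * Real.tanh x) / (1 - Real.tanh β * Real.tanh x))
        ≤ Real.log (Real.exp (2 * β)) := Real.log_le_log (by positivity) key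
      _ = 2 * β := Real.log_exp _
  linarith

lemma continuous_L : Continuous (L θ) := by
  have heq : L θ = fun y => (1 / 2) * (Real.log (N θ y) - Real.log (D θ y)) :=
    funext fun y => L_eq hθ hθ1 y
  rw [heq]
  apply Continuous.mul continuous_const
  apply Continuous.sub
  · apply Continuous.log (by unfold N; continuity)
      (fun x => ne_of_gt (N_pos hθ hθ1 x))
  · apply Continuous.log (by unfold D; continuity)
      (fun x => ne_of_gt (D_pos hθ hθ1 x))

lemma L'_zero : L' θ 0 = θ := by
  unfold L' N D
  norm_num

/-- near zero, `n * L θ₀ x ≥ x`, provided `n * θ₀ > 1`. -/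
lemma exists_low_barrier {n : ℝ} (hn : 0 < n) (hnθ : 1 < n * θ) :
    ∃ c : ℝ, 0 < c ∧ ∀ x : ℝ, 0 ≤ x → x ≤ c → x ≤ n * L θ x := by
  set s : ℝ := (θ + 1/n) / 2 with hs
  have hsθ : s < θ := by
    rw [hs]
    have : 1/n < θ := by
      rw [div_lt_iff₀ hn]; linarith [mul_comm n θ]
    linarith
  have hspos : 0 < s := by
    have : 0 < 1/n := by positivity
    rw [hs]; linarith
  have hns : 1 < n * s := by
    rw [hs]
    have h1 : n * ((θ + 1/n)/2) = (n*θ + 1)/2 := by field_simp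
    rw [h1]; linarith
  have hcont : ContinuousAt (L' θ) 0 := (continuous_L' hθ hθ1).continuousAt
  have hev : ∀ᶠ y in nhds (0:ℝ), s < L' θ y := by
    apply ContinuousAt.eventually_lt continuousAt_const hcont
    rw [L'_zero hθ hθ1]; exact hsθ
  rw [Metric.eventually_nhds_iff] at hev
  obtain ⟨ε, hε, hball⟩ := hev
  refine ⟨ε/2, by positivity, fun x hx0 hxc => ?_⟩
  have hint : s * x ≤ L θ x := by
    rw [L_FTC hθ hθ1 hx0]
    have : ∫ t in (0:ℝ)..x, (s : ℝ) ≤ ∫ t in (0:ℝ)..x, L' θ t := by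
      apply intervalIntegral.integral_mono_on hx0 intervalIntegrable_const
        ((continuous_L' hθ hθ1).intervalIntegrable 0 x)
      intro t ht
      apply le_of_lt (hball ?_)
      rw [Real.dist_eq, sub_zero, abs_of_nonneg ht.1]
      exact lt_of_le_of_lt (le_trans ht.2 hxc) (by linarith)
    rw [intervalIntegral.integral_const] at this
    simp only [sub_zero, smul_eq_mul] at this
    calc s * x = x * s := mul_comm _ _
      _ ≤ ∫ t in (0:ℝ)..x, L' θ t := this
  calc x = 1 * x := (one_mul x).symm
    _ ≤ (n * s) * x := by nlinarith
    _ = n * (s * x) := by ring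
    _ ≤ n * L θ x := by nlinarith

/-- the contraction constant `ρ < 1` on `[c', ∞)`. -/
lemma exists_rho {c' : ℝ} (hc' : 0 < c') :
    ∃ ρ : ℝ, 1/2 ≤ ρ ∧ ρ < 1 ∧ ∀ x : ℝ, c' ≤ x → x * L' θ x ≤ ρ * L θ x := by
  set κ := L θ c' with hκ
  have hκpos : 0 < κ := L_pos hθ hθ1 hc'
  set M : ℝ := max c' (max 1 (8*θ/((1-θ^2)*κ))) with hM
  have hcM : c' ≤ M := le_max_left _ _
  have h1M : 1 ≤ M := le_trans (le_max_left _ _) (le_max_right _ _)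
  have hθ2 : 0 < 1 - θ^2 := by nlinarith
  -- max of x L'/L on [c', M]
  have hLpos : ∀ x ∈ Set.Icc c' M, 0 < L θ x := fun x hx => L_pos hθ hθ1 (lt_of_lt_of_le hc' hx.1)
  have hgcont : ContinuousOn (fun x => x * L' θ x / L θ x) (Set.Icc c' M) := by
    apply ContinuousOn.div
    · exact (continuous_id.mul (continuous_L' hθ hθ1)).continuousOn
    · exact (continuous_L hθ hθ1).continuousOn
    · exact fun x hx => ne_of_gt (hLpos x hx)
  obtain ⟨x₀, hx₀mem, hx₀max⟩ := (isCompact_Icc (a := c') (b := M)).exists_isMaxOn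
    (Set.nonempty_Icc.2 hcM) hgcont
  set ρ₁ : ℝ := x₀ * L' θ x₀ / L θ x₀ with hρ₁
  have hρ₁lt : ρ₁ < 1 := by
    rw [hρ₁, div_lt_one (hLpos x₀ hx₀mem)]
    exact mul_L'_lt_L hθ hθ1 (lt_of_lt_of_le hc' hx₀mem.1)
  refine ⟨max ρ₁ (1/2), le_max_right _ _, max_lt hρ₁lt (by norm_num), fun x hcx => ?_⟩
  have hx0 : 0 < x := lt_of_lt_of_le hc' hcx
  have hLx := L_pos hθ hθ1 hx0
  by_cases hxM : x ≤ M
  · have hmem : x ∈ Set.Icc c' M := ⟨hcx, hxM⟩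
    have := hx₀max hmem
    simp only [hρ₁] at this
    have h2 : x * L' θ x / L θ x ≤ ρ₁ := this
    have h3 : x * L' θ x ≤ ρ₁ * L θ x := by
      rw [div_le_iff₀ hLx] at h2; linarith [h2]
    calc x * L' θ x ≤ ρ₁ * L θ x := h3
      _ ≤ max ρ₁ (1/2) * L θ x := by
          apply mul_le_mul_of_nonneg_right (le_max_left _ _) (le_of_lt hLx)
  · push_neg at hxM
    have hMx : M ≤ x := le_of_lt hxM
    have h1x : 1 ≤ x := le_trans h1M hMx
    have hE : Real.exp (2*x) ≥ x^2 := by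
      have h := Real.add_one_le_exp x
      have hx2 : x ≤ Real.exp x := by linarith
      have : Real.exp (2*x) = Real.exp x * Real.exp x := by rw [two_mul, Real.exp_add]
      rw [this]
      nlinarith [Real.exp_pos x]
    have hNDge : N θ x * D θ x ≥ (1-θ^2) * (Real.exp (2*x))^2 := by
      rw [ND_eq hθ hθ1]
      have := Real.exp_pos (2*x)
      nlinarith
    have hstep1 : x * L' θ x ≤ 4*θ*x/((1-θ^2) * Real.exp (2*x)) := by
      unfold L'
      have hND : 0 < N θ x * D θ x := mul_pos (N_pos hθ hθ1 x) (D_pos hθ hθ1 x)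
      have hEp := Real.exp_pos (2*x)
      rw [mul_div_assoc', div_le_div_iff₀ hND (by positivity)]
      have h4 : (0:ℝ) ≤ 4*θ*Real.exp (2*x) * x := by positivity
      nlinarith [mul_le_mul_of_nonneg_left hNDge (le_of_lt (mul_pos (mul_pos (by linarith : (0:ℝ) < 4*θ) hEp) hx0))]
    have hstep2 : 4*θ*x/((1-θ^2) * Real.exp (2*x)) ≤ 4*θ/((1-θ^2)*x) := by
      rw [div_le_div_iff₀ (by positivity) (by positivity)]
      have hEx : x * x ≤ Real.exp (2*x) := by nlinarith
      nlinarith [mul_le_mul_of_nonneg_left hEx (by positivity : (0:ℝ) ≤ 4*θ*(1-θ^2))]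
    have hstep3 : 4*θ/((1-θ^2)*x) ≤ κ/2 := by
      have hMbig : 8*θ/((1-θ^2)*κ) ≤ x := le_trans (le_trans (le_max_right _ _) (le_max_right _ _)) hMx
      have hpos : (0:ℝ) < (1-θ^2)*κ := mul_pos hθ2 hκpos
      have h8 : ((1-θ^2)*κ) * (8*θ/((1-θ^2)*κ)) = 8*θ := by field_simp
      have h9 : 8*θ ≤ ((1-θ^2)*κ) * x := by
        have := mul_le_mul_of_nonneg_left hMbig (le_of_lt hpos)
        rw [h8] at this; exact this
      rw [div_le_div_iff₀ (by positivity) (by norm_num)]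
      nlinarith
    have hκL : κ ≤ L θ x := L_mono hθ hθ1 (le_of_lt hc') hcx
    calc x * L' θ x ≤ κ/2 := le_trans hstep1 (le_trans hstep2 hstep3)
      _ ≤ L θ x * (1/2) := by linarith
      _ ≤ max ρ₁ (1/2) * L θ x := by
          rw [mul_comm]
          exact mul_le_mul_of_nonneg_right (le_max_right _ _) (le_of_lt hLx)

/-- the key contraction inequality. -/
lemma key_contract {c' ρ x y r : ℝ} (hc' : 0 < c')
    (hρ : ∀ z : ℝ, c' ≤ z → z * L' θ z ≤ ρ * L θ z) (hρ0 : 0 ≤ ρ)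
    (hr : 0 ≤ r) (hcx : c' ≤ x) (hxy : x ≤ y) (hyr : y ≤ (1+r)*x) :
    L θ y ≤ (1 + ρ*r) * L θ x := by
  have hx0 : 0 < x := lt_of_lt_of_le hc' hcx
  have hL0 : 0 ≤ L θ x := L_nonneg hθ hθ1 (le_of_lt hx0)
  rcases eq_or_lt_of_le hxy with heq | hlt
  · rw [← heq]
    nlinarith [mul_nonneg (mul_nonneg hρ0 hr) hL0]
  · obtain ⟨ξ, hξ, hslope⟩ := exists_hasDerivAt_eq_slope (L θ) (L' θ) hlt
      ((continuous_L hθ hθ1).continuousOn)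
      (fun t _ => hasDerivAt_L hθ hθ1 t)
    have hdiff : L θ y - L θ x = L' θ ξ * (y - x) := by
      rw [hslope, div_mul_cancel₀]
      exact ne_of_gt (by linarith)
    have hanti : L' θ ξ ≤ L' θ x := L'_antitone hθ hθ1 (le_of_lt hx0) (le_of_lt hξ.1)
    have hxx : x * L' θ x ≤ ρ * L θ x := hρ x hcx
    have hyx : y - x ≤ r * x := by linarith
    have hL'0 : 0 ≤ L' θ x := le_of_lt (L'_pos hθ hθ1 x)
    have h1 : L θ y - L θ x ≤ L' θ x * (y - x) := by
      rw [hdiff]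
      apply mul_le_mul_of_nonneg_right hanti (by linarith)
    have h2 : L' θ x * (y - x) ≤ L' θ x * (r * x) :=
      mul_le_mul_of_nonneg_left hyx hL'0
    have h3 : L' θ x * (r * x) = r * (x * L' θ x) := by ring
    have h4 : r * (x * L' θ x) ≤ r * (ρ * L θ x) := by
      apply mul_le_mul_of_nonneg_left hxx hr
    nlinarith

end theta



open ENNReal

lemma bpFun_top (β : ℝ) : bpFun β ⊤ = ENNReal.ofReal β := if_pos rfl

lemma bpFun_ne_top (β : ℝ) {h : ℝ≥0∞} (hh : h ≠ ⊤) :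
    bpFun β h = ENNReal.ofReal (L (Real.tanh β) h.toReal) := if_neg hh

section beta
variable {β : ℝ} (hβ : 0 < β)
include hβ

lemma htanhβ : 0 < Real.tanh β := tanh_pos' hβ

lemma bpFun_le (h : ℝ≥0∞) : bpFun β h ≤ ENNReal.ofReal β := by
  by_cases hh : h = ⊤
  · rw [hh, bpFun_top]
  · rw [bpFun_ne_top β hh]
    exact ENNReal.ofReal_le_ofReal (L_le_beta hβ ENNReal.toReal_nonneg)

lemma bpFun_mono {u v : ℝ≥0∞} (huv : u ≤ v) : bpFun β u ≤ bpFun β v := by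
  by_cases hv : v = ⊤
  · rw [hv, bpFun_top]; exact bpFun_le hβ u
  · have hu : u ≠ ⊤ := fun h => hv (top_le_iff.1 (h ▸ huv))
    rw [bpFun_ne_top β hu, bpFun_ne_top β hv]
    exact ENNReal.ofReal_le_ofReal
      (L_mono (tanh_pos' hβ) (tanh_lt_one' β) ENNReal.toReal_nonneg
        (ENNReal.toReal_mono hv huv))

lemma bpFun_lower {c' : ℝ} (hc' : 0 < c') {u : ℝ≥0∞} (hu : ENNReal.ofReal c' ≤ u) :
    ENNReal.ofReal (L (Real.tanh β) c') ≤ bpFun β u := by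
  by_cases hutop : u = ⊤
  · rw [hutop, bpFun_top]
    exact ENNReal.ofReal_le_ofReal (L_le_beta hβ hc'.le)
  · rw [bpFun_ne_top β hutop]
    apply ENNReal.ofReal_le_ofReal
    exact L_mono (tanh_pos' hβ) (tanh_lt_one' β) hc'.le
      ((ENNReal.ofReal_le_iff_le_toReal hutop).1 hu)

lemma bpFun_contract {c' ρ r : ℝ} (hc' : 0 < c')
    (hρkey : ∀ z : ℝ, c' ≤ z → z * L' (Real.tanh β) z ≤ ρ * L (Real.tanh β) z)
    (hρ0 : 0 ≤ ρ) (hr : 0 ≤ r) {u v : ℝ≥0∞}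
    (h1 : ENNReal.ofReal c' ≤ u) (h2 : u ≤ v)
    (h3 : v ≤ ENNReal.ofReal (1 + r) * u) :
    bpFun β v ≤ ENNReal.ofReal (1 + ρ * r) * bpFun β u := by
  have hfac : (1:ℝ) ≤ 1 + ρ * r := by nlinarith
  by_cases hu : u = ⊤
  · have hv : v = ⊤ := top_le_iff.1 (hu ▸ h2)
    rw [hu, hv, bpFun_top]
    exact le_mul_of_one_le_left zero_le (ENNReal.one_le_ofReal.2 hfac)
  · have hv : v ≠ ⊤ := by
      intro h
      exact (ENNReal.mul_ne_top ENNReal.ofReal_ne_top hu) (top_le_iff.1 (h ▸ h3))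
    set x := u.toReal
    set y := v.toReal
    have hcx : c' ≤ x := (ENNReal.ofReal_le_iff_le_toReal hu).1 h1
    have hxy : x ≤ y := ENNReal.toReal_mono hv h2
    have hyr : y ≤ (1 + r) * x := by
      have h4 : v ≤ ENNReal.ofReal ((1 + r) * x) := by
        rw [ENNReal.ofReal_mul (by linarith)]
        calc v ≤ ENNReal.ofReal (1 + r) * u := h3
          _ = ENNReal.ofReal (1 + r) * ENNReal.ofReal x := by rw [ENNReal.ofReal_toReal hu]
      have := ENNReal.toReal_mono ENNReal.ofReal_ne_top h4
      rwa [ENNReal.toReal_ofReal (by nlinarith : (0:ℝ) ≤ (1+r)*x)] at this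
    have hkey := key_contract (tanh_pos' hβ) (tanh_lt_one' β) hc' hρkey hρ0 hr hcx hxy hyr
    rw [bpFun_ne_top β hu, bpFun_ne_top β hv, ← ENNReal.ofReal_mul (by linarith)]
    exact ENNReal.ofReal_le_ofReal hkey

lemma bpFun_firststep {c' R₀ : ℝ} (hc' : 0 < c')
    (hR : (1 + R₀) * L (Real.tanh β) c' = β) {u : ℝ≥0∞}
    (h1 : ENNReal.ofReal c' ≤ u) :
    ENNReal.ofReal β ≤ ENNReal.ofReal (1 + R₀) * bpFun β u := by
  have hκ : 0 < L (Real.tanh β) c' := L_pos (tanh_pos' hβ) (tanh_lt_one' β) hc'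
  calc ENNReal.ofReal β = ENNReal.ofReal ((1 + R₀) * L (Real.tanh β) c') := by rw [hR]
    _ = ENNReal.ofReal (1 + R₀) * ENNReal.ofReal (L (Real.tanh β) c') := by
        apply ENNReal.ofReal_mul
        nlinarith [L_le_beta hβ hc'.le, hβ]
    _ ≤ ENNReal.ofReal (1 + R₀) * bpFun β u :=
        mul_le_mul_right (bpFun_lower hβ hc' h1) _

end beta

/-! ### Measure-theoretic infrastructure -/

section Measures

open MeasureTheory

lemma measurable_bpFun (β : ℝ) : Measurable (bpFun β) := by
  unfold bpFun
  have hcond : MeasurableSet {h : ℝ≥0∞ | h = ⊤} := by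
    simpa using measurableSet_singleton (⊤ : ℝ≥0∞)
  apply Measurable.ite hcond measurable_const
  apply ENNReal.measurable_ofReal.comp
  have htanh : Measurable Real.tanh := by
    have h : Real.tanh = fun x => Real.sinh x / Real.cosh x :=
      funext fun x => Real.tanh_eq_sinh_div_cosh x
    rw [h]
    exact (Real.continuous_sinh.div Real.continuous_cosh
      fun x => ne_of_gt (Real.cosh_pos x)).measurable
  have h1 : Measurable fun h : ℝ≥0∞ => Real.tanh β * Real.tanh h.toReal :=
    (htanh.comp ENNReal.measurable_toReal).const_mul _
  exact (Real.measurable_log.comp ((h1.const_add 1).div (h1.const_sub 1))).const_mul _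

lemma measurable_sum1 (β : ℝ) (j : ℕ) :
    Measurable (fun h : Fin j → ℝ≥0∞ => ∑ ℓ, bpFun β (h ℓ)) :=
  Finset.measurable_sum _ (fun ℓ _ => (measurable_bpFun β).comp (measurable_pi_apply ℓ))

lemma measurable_sum2 (β : ℝ) (j : ℕ) :
    Measurable (fun h : Fin j → ℝ≥0∞ × ℝ≥0∞ =>
      ((∑ ℓ, bpFun β (h ℓ).1, ∑ ℓ, bpFun β (h ℓ).2) : ℝ≥0∞ × ℝ≥0∞)) := by
  apply Measurable.prodMk
  · apply Finset.measurable_sum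
    intro ℓ _
    exact (measurable_bpFun β).comp (measurable_pi_apply ℓ).fst
  · apply Finset.measurable_sum
    intro ℓ _
    exact (measurable_bpFun β).comp (measurable_pi_apply ℓ).snd

/-- the coupled BP map on measures on pairs. -/
noncomputable def bpMap2 (P : ℕ → ℝ) (m β : ℝ) (Λ : Measure (ℝ≥0∞ × ℝ≥0∞)) :
    Measure (ℝ≥0∞ × ℝ≥0∞) :=
  Measure.sum fun k : ℕ =>
    ENNReal.ofReal ((k : ℝ) * P k / m) •
      Measure.map (fun h : Fin (k - 1) → ℝ≥0∞ × ℝ≥0∞ =>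
          ((∑ ℓ, bpFun β (h ℓ).1, ∑ ℓ, bpFun β (h ℓ).2) : ℝ≥0∞ × ℝ≥0∞))
        (Measure.pi fun _ => Λ)

section PM
variable {P : ℕ → ℝ} {m : ℝ}
  (hP0 : ∀ k, 0 ≤ P k) (hm : HasSum (fun k : ℕ => (k : ℝ) * P k) m) (hmpos : 0 < m)

include hP0 hm hmpos in
lemma tsum_coeff : (∑' k : ℕ, ENNReal.ofReal ((k : ℝ) * P k / m)) = 1 := by
  have hnn : ∀ k : ℕ, 0 ≤ (k : ℝ) * P k / m :=
    fun k => div_nonneg (mul_nonneg (Nat.cast_nonneg k) (hP0 k)) hmpos.le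
  have hsummable : Summable (fun k : ℕ => (k : ℝ) * P k / m) := hm.summable.div_const m
  rw [← ENNReal.ofReal_tsum_of_nonneg hnn hsummable]
  have h1 : HasSum (fun k : ℕ => (k : ℝ) * P k / m) 1 := by
    have := hm.div_const m
    rwa [div_self hmpos.ne'] at this
  rw [h1.tsum_eq]
  simp

include hP0 hm hmpos in
lemma isProb_bpMap (β : ℝ) (μ : Measure ℝ≥0∞) [IsProbabilityMeasure μ] :
    IsProbabilityMeasure (bpMap P m β μ) := by
  constructor
  rw [bpMap, Measure.sum_apply _ MeasurableSet.univ]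
  have h1 : ∀ k : ℕ,
      (ENNReal.ofReal ((k : ℝ) * P k / m) •
        Measure.map (fun h : Fin (k - 1) → ℝ≥0∞ => ∑ ℓ, bpFun β (h ℓ))
          (Measure.pi fun _ => μ)) Set.univ = ENNReal.ofReal ((k : ℝ) * P k / m) := by
    intro k
    rw [Measure.smul_apply, Measure.map_apply (measurable_sum1 β _) MeasurableSet.univ]
    simp [Measure.pi_univ]
  simp_rw [h1]
  exact tsum_coeff hP0 hm hmpos

include hP0 hm hmpos in
lemma isProb_bpMap2 (β : ℝ) (Λ : Measure (ℝ≥0∞ × ℝ≥0∞)) [IsProbabilityMeasure Λ] :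
    IsProbabilityMeasure (bpMap2 P m β Λ) := by
  constructor
  rw [bpMap2, Measure.sum_apply _ MeasurableSet.univ]
  have h1 : ∀ k : ℕ,
      (ENNReal.ofReal ((k : ℝ) * P k / m) •
        Measure.map (fun h : Fin (k - 1) → ℝ≥0∞ × ℝ≥0∞ =>
          ((∑ ℓ, bpFun β (h ℓ).1, ∑ ℓ, bpFun β (h ℓ).2) : ℝ≥0∞ × ℝ≥0∞))
          (Measure.pi fun _ => Λ)) Set.univ = ENNReal.ofReal ((k : ℝ) * P k / m) := by
    intro k
    rw [Measure.smul_apply, Measure.map_apply (measurable_sum2 β _) MeasurableSet.univ]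
    simp [Measure.pi_univ]
  simp_rw [h1]
  exact tsum_coeff hP0 hm hmpos

lemma map_fst_bpMap2 (β : ℝ) (Λ : Measure (ℝ≥0∞ × ℝ≥0∞)) [IsProbabilityMeasure Λ] :
    Measure.map Prod.fst (bpMap2 P m β Λ) = bpMap P m β (Measure.map Prod.fst Λ) := by
  haveI : IsProbabilityMeasure (Measure.map Prod.fst Λ) :=
    Measure.isProbabilityMeasure_map measurable_fst.aemeasurable
  unfold bpMap2 bpMap
  rw [Measure.map_sum measurable_fst.aemeasurable]
  congr 1
  funext k
  rw [Measure.map_smul]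
  congr 1
  have hproj : Measurable (fun (h : Fin (k-1) → ℝ≥0∞ × ℝ≥0∞) (ℓ : Fin (k-1)) => (h ℓ).1) :=
    measurable_pi_lambda _ (fun ℓ => (measurable_pi_apply ℓ).fst)
  have hpres : Measure.map (fun (h : Fin (k-1) → ℝ≥0∞ × ℝ≥0∞) (ℓ : Fin (k-1)) => (h ℓ).1)
      (Measure.pi fun _ => Λ) = Measure.pi (fun _ => Measure.map Prod.fst Λ) :=
    (measurePreserving_pi _ _ (fun _ => ⟨measurable_fst, rfl⟩)).map_eq
  calc Measure.map Prod.fst (Measure.map (fun h : Fin (k - 1) → ℝ≥0∞ × ℝ≥0∞ =>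
          ((∑ ℓ, bpFun β (h ℓ).1, ∑ ℓ, bpFun β (h ℓ).2) : ℝ≥0∞ × ℝ≥0∞))
        (Measure.pi fun _ => Λ))
      = Measure.map ((fun h : Fin (k-1) → ℝ≥0∞ => ∑ ℓ, bpFun β (h ℓ)) ∘
          (fun (h : Fin (k-1) → ℝ≥0∞ × ℝ≥0∞) (ℓ : Fin (k-1)) => (h ℓ).1))
        (Measure.pi fun _ => Λ) :=
        Measure.map_map measurable_fst (measurable_sum2 β _)
    _ = Measure.map (fun h : Fin (k-1) → ℝ≥0∞ => ∑ ℓ, bpFun β (h ℓ))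
        (Measure.map (fun (h : Fin (k-1) → ℝ≥0∞ × ℝ≥0∞) (ℓ : Fin (k-1)) => (h ℓ).1)
          (Measure.pi fun _ => Λ)) :=
        (Measure.map_map (measurable_sum1 β _) hproj).symm
    _ = Measure.map (fun h : Fin (k-1) → ℝ≥0∞ => ∑ ℓ, bpFun β (h ℓ))
        (Measure.pi (fun _ => Measure.map Prod.fst Λ)) := by rw [hpres]

lemma map_snd_bpMap2 (β : ℝ) (Λ : Measure (ℝ≥0∞ × ℝ≥0∞)) [IsProbabilityMeasure Λ] :
    Measure.map Prod.snd (bpMap2 P m β Λ) = bpMap P m β (Measure.map Prod.snd Λ) := by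
  haveI : IsProbabilityMeasure (Measure.map Prod.snd Λ) :=
    Measure.isProbabilityMeasure_map measurable_snd.aemeasurable
  unfold bpMap2 bpMap
  rw [Measure.map_sum measurable_snd.aemeasurable]
  congr 1
  funext k
  rw [Measure.map_smul]
  congr 1
  have hproj : Measurable (fun (h : Fin (k-1) → ℝ≥0∞ × ℝ≥0∞) (ℓ : Fin (k-1)) => (h ℓ).2) :=
    measurable_pi_lambda _ (fun ℓ => (measurable_pi_apply ℓ).snd)
  have hpres : Measure.map (fun (h : Fin (k-1) → ℝ≥0∞ × ℝ≥0∞) (ℓ : Fin (k-1)) => (h ℓ).2)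
      (Measure.pi fun _ => Λ) = Measure.pi (fun _ => Measure.map Prod.snd Λ) :=
    (measurePreserving_pi _ _ (fun _ => ⟨measurable_snd, rfl⟩)).map_eq
  calc Measure.map Prod.snd (Measure.map (fun h : Fin (k - 1) → ℝ≥0∞ × ℝ≥0∞ =>
          ((∑ ℓ, bpFun β (h ℓ).1, ∑ ℓ, bpFun β (h ℓ).2) : ℝ≥0∞ × ℝ≥0∞))
        (Measure.pi fun _ => Λ))
      = Measure.map ((fun h : Fin (k-1) → ℝ≥0∞ => ∑ ℓ, bpFun β (h ℓ)) ∘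
          (fun (h : Fin (k-1) → ℝ≥0∞ × ℝ≥0∞) (ℓ : Fin (k-1)) => (h ℓ).2))
        (Measure.pi fun _ => Λ) :=
        Measure.map_map measurable_snd (measurable_sum2 β _)
    _ = Measure.map (fun h : Fin (k-1) → ℝ≥0∞ => ∑ ℓ, bpFun β (h ℓ))
        (Measure.map (fun (h : Fin (k-1) → ℝ≥0∞ × ℝ≥0∞) (ℓ : Fin (k-1)) => (h ℓ).2)
          (Measure.pi fun _ => Λ)) :=
        (Measure.map_map (measurable_sum1 β _) hproj).symm
    _ = Measure.map (fun h : Fin (k-1) → ℝ≥0∞ => ∑ ℓ, bpFun β (h ℓ))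
        (Measure.pi (fun _ => Measure.map Prod.snd Λ)) := by rw [hpres]

lemma ae_pi {X : Type*} [MeasurableSpace X] (Λ : Measure X) [SigmaFinite Λ]
    {S : Set X} (hae : ∀ᵐ a ∂Λ, a ∈ S) (j : ℕ) :
    ∀ᵐ h ∂(Measure.pi fun _ : Fin j => Λ), ∀ ℓ, h ℓ ∈ S := by
  rw [ae_iff] at hae ⊢
  have hsub : {h : Fin j → X | ¬ ∀ ℓ, h ℓ ∈ S} ⊆
      ⋃ ℓ : Fin j, (Function.eval ℓ) ⁻¹' {a | ¬ a ∈ S} := by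
    intro h hh
    push_neg at hh
    obtain ⟨ℓ, hℓ⟩ := hh
    exact Set.mem_iUnion.2 ⟨ℓ, hℓ⟩
  apply measure_mono_null hsub
  apply measure_iUnion_null
  intro ℓ
  exact Measure.pi_eval_preimage_null _ hae

variable {dstar : ℕ} (hPmin : ∀ k, k < dstar → P k = 0)

include hPmin in
lemma ae_bpMap2_step (β : ℝ) {S T : Set (ℝ≥0∞ × ℝ≥0∞)} (hT : MeasurableSet T)
    (harith : ∀ k : ℕ, dstar ≤ k → ∀ h : Fin (k - 1) → ℝ≥0∞ × ℝ≥0∞,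
      (∀ ℓ, h ℓ ∈ S) → ((∑ ℓ, bpFun β (h ℓ).1, ∑ ℓ, bpFun β (h ℓ).2) : ℝ≥0∞ × ℝ≥0∞) ∈ T)
    (Λ : Measure (ℝ≥0∞ × ℝ≥0∞)) [SigmaFinite Λ] (hae : ∀ᵐ p ∂Λ, p ∈ S) :
    ∀ᵐ p ∂(bpMap2 P m β Λ), p ∈ T := by
  have hTc : MeasurableSet {p : ℝ≥0∞ × ℝ≥0∞ | ¬ p ∈ T} := hT.compl
  rw [ae_iff]
  rw [bpMap2, Measure.sum_apply _ hTc]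
  apply ENNReal.tsum_eq_zero.2
  intro k
  rw [Measure.smul_apply, Measure.map_apply (measurable_sum2 β _) hTc]
  by_cases hk : dstar ≤ k
  · have hnull : (Measure.pi fun _ : Fin (k-1) => Λ)
        ((fun h : Fin (k - 1) → ℝ≥0∞ × ℝ≥0∞ =>
          ((∑ ℓ, bpFun β (h ℓ).1, ∑ ℓ, bpFun β (h ℓ).2) : ℝ≥0∞ × ℝ≥0∞)) ⁻¹' {p | ¬ p ∈ T}) = 0 := by
      apply measure_mono_null (fun h hh => ?_) ((ae_iff.1 (ae_pi Λ hae (k-1))))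
      intro hall
      exact hh (harith k hk h hall)
    rw [hnull, smul_zero]
  · have hPk : P k = 0 := hPmin k (lt_of_not_ge hk)
    simp [hPk]

include hPmin in
lemma ae_bpMap_step (β : ℝ) {S T : Set ℝ≥0∞} (hT : MeasurableSet T)
    (harith : ∀ k : ℕ, dstar ≤ k → ∀ h : Fin (k - 1) → ℝ≥0∞,
      (∀ ℓ, h ℓ ∈ S) → (∑ ℓ, bpFun β (h ℓ)) ∈ T)
    (μ : Measure ℝ≥0∞) [SigmaFinite μ] (hae : ∀ᵐ x ∂μ, x ∈ S) :
    ∀ᵐ x ∂(bpMap P m β μ), x ∈ T := by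
  have hTc : MeasurableSet {x : ℝ≥0∞ | ¬ x ∈ T} := hT.compl
  rw [ae_iff]
  rw [bpMap, Measure.sum_apply _ hTc]
  apply ENNReal.tsum_eq_zero.2
  intro k
  rw [Measure.smul_apply, Measure.map_apply (measurable_sum1 β _) hTc]
  by_cases hk : dstar ≤ k
  · have hnull : (Measure.pi fun _ : Fin (k-1) => μ)
        ((fun h : Fin (k - 1) → ℝ≥0∞ => ∑ ℓ, bpFun β (h ℓ)) ⁻¹' {x | ¬ x ∈ T}) = 0 := by
      apply measure_mono_null (fun h hh => ?_) ((ae_iff.1 (ae_pi μ hae (k-1))))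
      intro hall
      exact hh (harith k hk h hall)
    rw [hnull, smul_zero]
  · have hPk : P k = 0 := hPmin k (lt_of_not_ge hk)
    simp [hPk]

end PM

/-- integrability of continuous functions on a compact space. -/
lemma integrable_cont {X : Type*} [TopologicalSpace X] [CompactSpace X]
    [MeasurableSpace X] [OpensMeasurableSpace X] (μ : Measure X) [IsFiniteMeasure μ]
    {g : X → ℝ} (hg : Continuous g) : Integrable g μ := by
  obtain ⟨b, hb⟩ := (isCompact_univ.image (hg.norm)).bddAbove
  apply (integrable_const b).mono' hg.aestronglyMeasurable
  apply ae_of_all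
  intro x
  exact hb (Set.mem_image_of_mem _ (Set.mem_univ x))

/-- the uniform-continuity modulus on the near-diagonal sets. -/
lemma modulus {g : ℝ≥0∞ → ℝ} (hg : Continuous g) {ε : ℝ} (hε : 0 < ε) :
    ∃ n : ℕ, ∀ p : ℝ≥0∞ × ℝ≥0∞, p.1 ≤ p.2 →
      p.2 ≤ ENNReal.ofReal (1 + 1/(n+1)) * p.1 → |g p.1 - g p.2| < ε := by
  by_contra hcon
  push_neg at hcon
  set K : ℕ → Set (ℝ≥0∞ × ℝ≥0∞) := fun n =>
    {p | p.1 ≤ p.2 ∧ p.2 ≤ ENNReal.ofReal (1 + 1/(n+1)) * p.1 ∧ ε ≤ |g p.1 - g p.2|} with hK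
  have hclosed : ∀ n, IsClosed (K n) := by
    intro n
    have hKn : K n = {p : ℝ≥0∞ × ℝ≥0∞ | p.1 ≤ p.2} ∩
        ({p : ℝ≥0∞ × ℝ≥0∞ | p.2 ≤ ENNReal.ofReal (1 + 1/(n+1)) * p.1} ∩
         {p : ℝ≥0∞ × ℝ≥0∞ | ε ≤ |g p.1 - g p.2|}) := rfl
    rw [hKn]
    have hc1 : IsClosed {p : ℝ≥0∞ × ℝ≥0∞ | p.1 ≤ p.2} :=
      isClosed_le (continuous_fst : Continuous (Prod.fst : ℝ≥0∞ × ℝ≥0∞ → ℝ≥0∞))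
        (continuous_snd : Continuous (Prod.snd : ℝ≥0∞ × ℝ≥0∞ → ℝ≥0∞))
    have hc2 : IsClosed {p : ℝ≥0∞ × ℝ≥0∞ | p.2 ≤ ENNReal.ofReal (1 + 1/(n+1)) * p.1} :=
      isClosed_le (continuous_snd : Continuous (Prod.snd : ℝ≥0∞ × ℝ≥0∞ → ℝ≥0∞))
        ((ENNReal.continuous_const_mul ENNReal.ofReal_ne_top).comp
          (continuous_fst : Continuous (Prod.fst : ℝ≥0∞ × ℝ≥0∞ → ℝ≥0∞)))
    have hgg : Continuous (fun p : ℝ≥0∞ × ℝ≥0∞ => |g p.1 - g p.2|) := by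
      apply Continuous.abs
      exact (hg.comp (continuous_fst : Continuous (Prod.fst : ℝ≥0∞ × ℝ≥0∞ → ℝ≥0∞))).sub
        (hg.comp (continuous_snd : Continuous (Prod.snd : ℝ≥0∞ × ℝ≥0∞ → ℝ≥0∞)))
    have hc3 : IsClosed {p : ℝ≥0∞ × ℝ≥0∞ | ε ≤ |g p.1 - g p.2|} :=
      isClosed_le continuous_const hgg
    exact hc1.inter (hc2.inter hc3)
  have hne : ∀ n, (K n).Nonempty := by
    intro n
    obtain ⟨p, h1, h2, h3⟩ := hcon n
    exact ⟨p, h1, h2, h3⟩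
  have hdec : ∀ n, K (n + 1) ⊆ K n := by
    intro n p hp
    refine ⟨hp.1, le_trans hp.2.1 ?_, hp.2.2⟩
    apply mul_le_mul_left
    apply ENNReal.ofReal_le_ofReal
    have h0 : (0:ℝ) < (n:ℝ) + 1 := by positivity
    have h1 : ((n:ℝ)) + 1 ≤ ((n+1:ℕ):ℝ) + 1 := by push_cast; linarith
    have h2 : (1:ℝ)/(((n+1:ℕ):ℝ)+1) ≤ 1/((n:ℝ)+1) := one_div_le_one_div_of_le h0 h1
    linarith
  obtain ⟨p, hp⟩ := IsCompact.nonempty_iInter_of_sequence_nonempty_isCompact_isClosed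
    K hdec hne ((hclosed 0).isCompact) hclosed
  have hpK : ∀ n, p ∈ K n := fun n => Set.mem_iInter.1 hp n
  have hple : p.1 ≤ p.2 := (hpK 0).1
  have hcontr : p.1 = p.2 := by
    by_cases h1top : p.1 = ⊤
    · rw [h1top]; exact (top_le_iff.1 (h1top ▸ hple)).symm
    · have h2top : p.2 ≠ ⊤ := by
        intro h
        have := (hpK 0).2.1
        rw [h] at this
        exact (ENNReal.mul_ne_top ENNReal.ofReal_ne_top h1top) (top_le_iff.1 this)
      have hkey : p.2.toReal ≤ p.1.toReal := by
        apply _root_.le_of_forall_pos_le_add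
        intro δ hδ
        obtain ⟨n, hn⟩ := exists_nat_gt (p.1.toReal / δ)
        have hmul := (hpK n).2.1
        have htr : p.2.toReal ≤ (1 + 1/(n+1)) * p.1.toReal := by
          have h2 := ENNReal.toReal_mono
            (ENNReal.mul_ne_top ENNReal.ofReal_ne_top h1top) hmul
          rwa [ENNReal.toReal_mul, ENNReal.toReal_ofReal (by positivity)] at h2
        have hsmall : p.1.toReal / ((n:ℝ)+1) ≤ δ := by
          rw [div_le_iff₀ (by positivity)]
          have h3 : p.1.toReal < δ * n := by
            rw [div_lt_iff₀ hδ] at hn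
            linarith [hn]
          nlinarith
        calc p.2.toReal ≤ (1 + 1/(n+1)) * p.1.toReal := htr
          _ = p.1.toReal + p.1.toReal/((n:ℝ)+1) := by ring
          _ ≤ p.1.toReal + δ := by linarith
      exact le_antisymm hple ((ENNReal.toReal_le_toReal h2top h1top).1 hkey)
  have := (hpK 0).2.2
  rw [hcontr, sub_self, abs_zero] at this
  linarith

end Measures

/-! ### Goodness sets and their propagation -/

lemma tanh_strict {x y : ℝ} (h : x < y) : Real.tanh x < Real.tanh y := by
  rw [tanh_exp, tanh_exp]
  have hx := Real.exp_pos (2 * x)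
  have hy := Real.exp_pos (2 * y)
  have hxy2 : Real.exp (2 * x) < Real.exp (2 * y) := Real.exp_lt_exp.2 (by linarith)
  rw [div_lt_div_iff₀ (by linarith) (by linarith)]
  nlinarith

def GoodSet (c' r : ℝ) : Set (ℝ≥0∞ × ℝ≥0∞) :=
  {p | ENNReal.ofReal c' ≤ p.1 ∧ p.1 ≤ p.2 ∧ p.2 ≤ ENNReal.ofReal (1 + r) * p.1}

def G0 (c' : ℝ) : Set (ℝ≥0∞ × ℝ≥0∞) := {p | ENNReal.ofReal c' ≤ p.1 ∧ p.2 = ⊤}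

lemma isClosed_GoodSet (c' r : ℝ) : IsClosed (GoodSet c' r) := by
  have hfst : Continuous (Prod.fst : ℝ≥0∞ × ℝ≥0∞ → ℝ≥0∞) := continuous_fst
  have hsnd : Continuous (Prod.snd : ℝ≥0∞ × ℝ≥0∞ → ℝ≥0∞) := continuous_snd
  have h1 : IsClosed {p : ℝ≥0∞ × ℝ≥0∞ | ENNReal.ofReal c' ≤ p.1} :=
    isClosed_le continuous_const hfst
  have h2 : IsClosed {p : ℝ≥0∞ × ℝ≥0∞ | p.1 ≤ p.2} := isClosed_le hfst hsnd
  have h3 : IsClosed {p : ℝ≥0∞ × ℝ≥0∞ | p.2 ≤ ENNReal.ofReal (1 + r) * p.1} :=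
    isClosed_le hsnd ((ENNReal.continuous_const_mul ENNReal.ofReal_ne_top).comp hfst)
  exact h1.inter (h2.inter h3)

lemma measurable_GoodSet (c' r : ℝ) : MeasurableSet (GoodSet c' r) :=
  (isClosed_GoodSet c' r).measurableSet

lemma sum_lower {β β₀ c' : ℝ} {dstar : ℕ} (hβ₀ : 0 < β₀) (hββ : β₀ ≤ β) (hc' : 0 < c')
    (hbar : c' ≤ ((dstar - 1 : ℕ) : ℝ) * L (Real.tanh β₀) c')
    (k : ℕ) (hk : dstar ≤ k) (u : Fin (k - 1) → ℝ≥0∞)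
    (hu : ∀ ℓ, ENNReal.ofReal c' ≤ u ℓ) :
    ENNReal.ofReal c' ≤ ∑ ℓ, bpFun β (u ℓ) := by
  have hβ : 0 < β := lt_of_lt_of_le hβ₀ hββ
  have hterm : ∀ ℓ, ENNReal.ofReal (L (Real.tanh β) c') ≤ bpFun β (u ℓ) :=
    fun ℓ => bpFun_lower hβ hc' (hu ℓ)
  have hsum : ∑ _ℓ : Fin (k-1), ENNReal.ofReal (L (Real.tanh β) c')
      ≤ ∑ ℓ, bpFun β (u ℓ) := Finset.sum_le_sum (fun ℓ _ => hterm ℓ)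
  rw [Finset.sum_const, Finset.card_univ, Fintype.card_fin] at hsum
  refine le_trans ?_ hsum
  rw [nsmul_eq_mul, ← ENNReal.ofReal_natCast, ← ENNReal.ofReal_mul (Nat.cast_nonneg _)]
  apply ENNReal.ofReal_le_ofReal
  have hLmono : L (Real.tanh β₀) c' ≤ L (Real.tanh β) c' :=
    L_mono_theta (tanh_pos' hβ) (tanh_lt_one' β) (tanh_pos' hβ₀) (tanh_mono' hββ) hc'.le
  have hcast : ((dstar - 1 : ℕ) : ℝ) ≤ ((k - 1 : ℕ) : ℝ) := by
    exact_mod_cast Nat.sub_le_sub_right hk 1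
  have hL0 : 0 ≤ L (Real.tanh β₀) c' := (L_pos (tanh_pos' hβ₀) (tanh_lt_one' β₀) hc').le
  have hcast0 : (0:ℝ) ≤ ((dstar - 1 : ℕ) : ℝ) := Nat.cast_nonneg _
  nlinarith

lemma good_step {β β₀ c' ρ r : ℝ} {dstar : ℕ}
    (hβ₀ : 0 < β₀) (hββ : β₀ ≤ β) (hc' : 0 < c')
    (hbar : c' ≤ ((dstar - 1 : ℕ) : ℝ) * L (Real.tanh β₀) c')
    (hρkey : ∀ z : ℝ, c' ≤ z → z * L' (Real.tanh β) z ≤ ρ * L (Real.tanh β) z)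
    (hρ0 : 0 ≤ ρ) (hr : 0 ≤ r)
    (k : ℕ) (hk : dstar ≤ k) (h : Fin (k - 1) → ℝ≥0∞ × ℝ≥0∞)
    (hgood : ∀ ℓ, h ℓ ∈ GoodSet c' r) :
    ((∑ ℓ, bpFun β (h ℓ).1, ∑ ℓ, bpFun β (h ℓ).2) : ℝ≥0∞ × ℝ≥0∞) ∈ GoodSet c' (ρ * r) := by
  have hβ : 0 < β := lt_of_lt_of_le hβ₀ hββ
  refine ⟨?_, ?_, ?_⟩
  · exact sum_lower hβ₀ hββ hc' hbar k hk _ (fun ℓ => (hgood ℓ).1)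
  · show (∑ ℓ, bpFun β (h ℓ).1) ≤ ∑ ℓ, bpFun β (h ℓ).2
    exact Finset.sum_le_sum (fun ℓ _ => bpFun_mono hβ (hgood ℓ).2.1)
  · show (∑ ℓ, bpFun β (h ℓ).2) ≤ ENNReal.ofReal (1 + ρ * r) * ∑ ℓ, bpFun β (h ℓ).1
    have hterm : ∀ ℓ, bpFun β (h ℓ).2 ≤ ENNReal.ofReal (1 + ρ * r) * bpFun β (h ℓ).1 :=
      fun ℓ => bpFun_contract hβ hc' hρkey hρ0 hr (hgood ℓ).1 (hgood ℓ).2.1 (hgood ℓ).2.2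
    calc ∑ ℓ, bpFun β (h ℓ).2
        ≤ ∑ ℓ, ENNReal.ofReal (1 + ρ * r) * bpFun β (h ℓ).1 :=
          Finset.sum_le_sum (fun ℓ _ => hterm ℓ)
      _ = ENNReal.ofReal (1 + ρ * r) * ∑ ℓ, bpFun β (h ℓ).1 := by
          rw [Finset.mul_sum]

lemma good_first {β β₀ c' R₀ : ℝ} {dstar : ℕ}
    (hβ₀ : 0 < β₀) (hββ : β₀ ≤ β) (hc' : 0 < c')
    (hbar : c' ≤ ((dstar - 1 : ℕ) : ℝ) * L (Real.tanh β₀) c')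
    (hR : (1 + R₀) * L (Real.tanh β) c' = β)
    (k : ℕ) (hk : dstar ≤ k) (h : Fin (k - 1) → ℝ≥0∞ × ℝ≥0∞)
    (hgood : ∀ ℓ, h ℓ ∈ G0 c') :
    ((∑ ℓ, bpFun β (h ℓ).1, ∑ ℓ, bpFun β (h ℓ).2) : ℝ≥0∞ × ℝ≥0∞) ∈ GoodSet c' R₀ := by
  have hβ : 0 < β := lt_of_lt_of_le hβ₀ hββ
  refine ⟨?_, ?_, ?_⟩
  · exact sum_lower hβ₀ hββ hc' hbar k hk _ (fun ℓ => (hgood ℓ).1)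
  · show (∑ ℓ, bpFun β (h ℓ).1) ≤ ∑ ℓ, bpFun β (h ℓ).2
    apply Finset.sum_le_sum
    intro ℓ _
    rw [(hgood ℓ).2]
    exact bpFun_mono hβ le_top
  · show (∑ ℓ, bpFun β (h ℓ).2) ≤ ENNReal.ofReal (1 + R₀) * ∑ ℓ, bpFun β (h ℓ).1
    have hterm : ∀ ℓ, bpFun β (h ℓ).2 ≤ ENNReal.ofReal (1 + R₀) * bpFun β (h ℓ).1 := by
      intro ℓ
      rw [(hgood ℓ).2, bpFun_top]
      exact bpFun_firststep hβ hc' hR (hgood ℓ).1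
    calc ∑ ℓ, bpFun β (h ℓ).2
        ≤ ∑ ℓ, ENNReal.ofReal (1 + R₀) * bpFun β (h ℓ).1 :=
          Finset.sum_le_sum (fun ℓ _ => hterm ℓ)
      _ = ENNReal.ofReal (1 + R₀) * ∑ ℓ, bpFun β (h ℓ).1 := by rw [Finset.mul_sum]

/-! ### the support of the weak limit -/

open MeasureTheory in
lemma limit_supp {ν : Measure ℝ≥0∞} [IsProbabilityMeasure ν] {μs : ℕ → Measure ℝ≥0∞}
    (hprob : ∀ t, IsProbabilityMeasure (μs t))
    (hconv : ∀ g : ℝ≥0∞ → ℝ, Continuous g →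
      Filter.Tendsto (fun t => ∫ x, g x ∂(μs t)) Filter.atTop (nhds (∫ x, g x ∂ν)))
    {c : ℝ} (hc : 0 < c) (hae : ∀ t, ∀ᵐ x ∂(μs t), ENNReal.ofReal c ≤ x) :
    ν (Set.Ici (ENNReal.ofReal (c/2))) = 1 := by
  set q : ℝ≥0∞ → ℝ := fun x => 1 - min 1 ((ENNReal.ofReal c - x).toReal / (c/2)) with hqdef
  have hsub : Continuous fun x : ℝ≥0∞ => ENNReal.ofReal c - x :=
    ENNReal.continuous_sub_left ENNReal.ofReal_ne_top
  have htoReal : Continuous fun x : ℝ≥0∞ => (ENNReal.ofReal c - x).toReal := by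
    apply ENNReal.continuousOn_toReal.comp_continuous hsub
    intro x
    simp only [Set.mem_setOf_eq]
    exact ne_top_of_le_ne_top ENNReal.ofReal_ne_top tsub_le_self
  have hqc : Continuous q := by
    apply continuous_const.sub
    exact continuous_const.min (htoReal.div_const _)
  have hq1 : ∀ x, ENNReal.ofReal c ≤ x → q x = 1 := by
    intro x hx
    have h0 : ENNReal.ofReal c - x = 0 := tsub_eq_zero_of_le hx
    simp [hqdef, h0]
  have hq0 : ∀ x, ¬ (ENNReal.ofReal (c/2) ≤ x) → q x = 0 := by
    intro x hx
    have hlt : x < ENNReal.ofReal (c/2) := lt_of_not_ge hx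
    have h1 : ENNReal.ofReal c - ENNReal.ofReal (c/2) ≤ ENNReal.ofReal c - x :=
      tsub_le_tsub_left hlt.le _
    have h2 : ENNReal.ofReal c - ENNReal.ofReal (c/2) = ENNReal.ofReal (c - c/2) :=
      (ENNReal.ofReal_sub c (by positivity)).symm
    have h3 : c/2 ≤ (ENNReal.ofReal c - x).toReal := by
      have h4 := ENNReal.toReal_mono
        (ne_top_of_le_ne_top ENNReal.ofReal_ne_top tsub_le_self) h1
      rw [h2, ENNReal.toReal_ofReal (by linarith)] at h4
      linarith [h4]
    have h5 : (1:ℝ) ≤ (ENNReal.ofReal c - x).toReal / (c/2) :=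
      (one_le_div (by positivity)).2 h3
    simp [hqdef, min_eq_left h5]
  have hq01 : ∀ x, 0 ≤ q x ∧ q x ≤ 1 := by
    intro x
    constructor
    · have : min 1 ((ENNReal.ofReal c - x).toReal / (c/2)) ≤ 1 := min_le_left _ _
      simp only [hqdef]; linarith
    · have : (0:ℝ) ≤ min 1 ((ENNReal.ofReal c - x).toReal / (c/2)) :=
        le_min (by norm_num) (by positivity)
      simp only [hqdef]; linarith
  have hint : ∀ t, ∫ x, q x ∂(μs t) = 1 := by
    intro t
    haveI := hprob t
    have heq : ∫ x, q x ∂(μs t) = ∫ _x, (1:ℝ) ∂(μs t) := by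
      apply integral_congr_ae
      filter_upwards [hae t] with x hx
      exact hq1 x hx
    rw [heq]
    simp
  have hlim : ∫ x, q x ∂ν = 1 := by
    have h1 := hconv q hqc
    simp_rw [hint] at h1
    exact (tendsto_nhds_unique h1 tendsto_const_nhds)
  have hmeas : MeasurableSet (Set.Ici (ENNReal.ofReal (c/2))) := measurableSet_Ici
  have hle : ∫ x, q x ∂ν ≤ ((ν (Set.Ici (ENNReal.ofReal (c/2)))).toReal) := by
    rw [← measureReal_def, ← integral_indicator_one hmeas]
    apply integral_mono (integrable_cont ν hqc)
      ((integrable_const 1).indicator hmeas)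
    intro x
    by_cases hx : x ∈ Set.Ici (ENNReal.ofReal (c/2))
    · rw [Set.indicator_of_mem hx]
      exact (hq01 x).2
    · rw [Set.indicator_of_notMem hx, hq0 x hx]
  have h2 : (1:ℝ) ≤ (ν (Set.Ici (ENNReal.ofReal (c/2)))).toReal := hlim ▸ hle
  refine le_antisymm prob_le_one ?_
  rw [← ENNReal.ofReal_one]
  exact ENNReal.ofReal_le_of_le_toReal h2

end BPaux

/-- **Attraction to the plus fixed point of the BP recursion** (Lemma 1.8).
Let `P` be an offspring law with minimum degree `d⋆ ≥ 3`, finite positive mean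
`m` and finite second factorial moment, and `β ≥ β₀ > β⋆ = atanh(1/(d⋆-1))`.
If the BP iterates started from `δ_∞` converge weakly to `ν_β⁺` (resp. `ν_{β₀}⁺`),
then from any initial law `μ₀` stochastically dominating `ν_{β₀}⁺` the iterates
of `Φ_β` converge weakly to `ν_β⁺`. -/
theorem bp_recursion_attraction
    (P : ℕ → ℝ) (dstar : ℕ) (hd : 3 ≤ dstar)
    (hP0 : ∀ k, 0 ≤ P k) (hP1 : ∑' k, P k = 1)
    (hPmin : ∀ k, k < dstar → P k = 0)
    (m : ℝ) (hm : HasSum (fun k : ℕ => (k : ℝ) * P k) m) (hmpos : 0 < m)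
    (hsecond : Summable fun k : ℕ => (k : ℝ) * ((k : ℝ) - 1) * P k)
    (β β₀ : ℝ) (hββ₀ : β₀ ≤ β)
    (hβ₀ : (1 / 2) * Real.log ((1 + (1 : ℝ) / (dstar - 1)) / (1 - (1 : ℝ) / (dstar - 1))) < β₀)
    (νβ νβ₀ : Measure ℝ≥0∞) [IsProbabilityMeasure νβ] [IsProbabilityMeasure νβ₀]
    (hνβ : WeakTendsto (fun t => (bpMap P m β)^[t] (Measure.dirac ⊤)) νβ)
    (hνβ₀ : WeakTendsto (fun t => (bpMap P m β₀)^[t] (Measure.dirac ⊤)) νβ₀)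
    (μ₀ : Measure ℝ≥0∞) [IsProbabilityMeasure μ₀]
    (hdom : ∀ s : ℝ≥0∞, νβ₀ (Set.Ici s) ≤ μ₀ (Set.Ici s)) :
    WeakTendsto (fun t => (bpMap P m β)^[t] μ₀) νβ := by
  classical
  -- ### real constants
  have hd1 : 1 ≤ dstar := by omega
  have hcast : ((dstar : ℝ) - 1) = ((dstar - 1 : ℕ) : ℝ) := by
    rw [Nat.cast_sub hd1, Nat.cast_one]
  set nR : ℝ := ((dstar - 1 : ℕ) : ℝ) with hnRdef
  have hnR2 : (2:ℝ) ≤ nR := by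
    rw [hnRdef]; exact_mod_cast (by omega : 2 ≤ dstar - 1)
  have hnRpos : (0:ℝ) < nR := by linarith
  rw [hcast] at hβ₀
  have ha : (0:ℝ) < 1/nR := by positivity
  have ha1 : 1/nR < 1 := by rw [div_lt_one hnRpos]; linarith
  have hLHS0 : 0 ≤ (1/2) * Real.log ((1 + 1/nR)/(1 - 1/nR)) := by
    apply mul_nonneg (by norm_num)
    apply Real.log_nonneg
    rw [le_div_iff₀ (by linarith)]
    linarith
  have hβ₀pos : 0 < β₀ := lt_of_le_of_lt hLHS0 hβ₀
  have hβpos : 0 < β := lt_of_lt_of_le hβ₀pos hββ₀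
  have hid : Real.tanh ((1/2) * Real.log ((1 + 1/nR)/(1 - 1/nR))) = 1/nR := by
    rw [BPaux.tanh_exp]
    have hRpos : (0:ℝ) < (1 + 1/nR)/(1 - 1/nR) := by
      apply div_pos <;> linarith
    have hE : Real.exp (2 * ((1/2) * Real.log ((1 + 1/nR)/(1 - 1/nR))))
        = (1 + 1/nR)/(1 - 1/nR) := by
      rw [show (2:ℝ) * ((1/2) * Real.log ((1 + 1/nR)/(1 - 1/nR)))
          = Real.log ((1 + 1/nR)/(1 - 1/nR)) by ring, Real.exp_log hRpos]
    rw [hE]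
    have hne : (1:ℝ) - 1/nR ≠ 0 := by linarith
    have h1 : (1 + 1/nR)/(1 - 1/nR) - 1 = (2*(1/nR))/(1 - 1/nR) := by
      rw [div_sub_one hne]
      congr 1
      ring
    have h2 : (1 + 1/nR)/(1 - 1/nR) + 1 = 2/(1 - 1/nR) := by
      rw [div_add_one hne]
      congr 1
      ring
    rw [h1, h2]
    rw [div_div_div_comm]
    rw [div_self hne, div_one]
    ring
  have hθ₀gt : 1/nR < Real.tanh β₀ := by
    calc 1/nR = Real.tanh ((1/2) * Real.log ((1 + 1/nR)/(1 - 1/nR))) := hid.symm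
      _ < Real.tanh β₀ := BPaux.tanh_strict hβ₀
  have hnθ : 1 < nR * Real.tanh β₀ := by
    have h1 := (div_lt_iff₀ hnRpos).1 hθ₀gt
    nlinarith
  -- ### the low barrier `c` and its half
  obtain ⟨c, hcpos, hbar⟩ := BPaux.exists_low_barrier
    (BPaux.tanh_pos' hβ₀pos) (BPaux.tanh_lt_one' β₀) hnRpos hnθ
  have hbarC : c ≤ nR * BPaux.L (Real.tanh β₀) c := hbar c hcpos.le (le_refl c)
  have hc2pos : (0:ℝ) < c/2 := by positivity
  have hbarC2 : c/2 ≤ nR * BPaux.L (Real.tanh β₀) (c/2) :=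
    hbar (c/2) hc2pos.le (by linarith)
  -- ### the contraction constant and initial ratio
  obtain ⟨ρ, hρhalf, hρ1, hρkey⟩ := BPaux.exists_rho
    (BPaux.tanh_pos' hβpos) (BPaux.tanh_lt_one' β) hc2pos
  have hρ0 : (0:ℝ) ≤ ρ := le_trans (by norm_num) hρhalf
  have hκpos : 0 < BPaux.L (Real.tanh β) (c/2) :=
    BPaux.L_pos (BPaux.tanh_pos' hβpos) (BPaux.tanh_lt_one' β) hc2pos
  set R₀ : ℝ := β / BPaux.L (Real.tanh β) (c/2) - 1 with hR₀def
  have hR : (1 + R₀) * BPaux.L (Real.tanh β) (c/2) = β := by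
    rw [hR₀def]; field_simp; ring
  have hR₀0 : 0 ≤ R₀ := by
    have hLβ : BPaux.L (Real.tanh β) (c/2) ≤ β := BPaux.L_le_beta hβpos hc2pos.le
    rw [hR₀def, sub_nonneg, le_div_iff₀ hκpos]; linarith
  -- ### support of the `β₀` chain and of `νβ₀`, `μ₀`
  have hprob0 : ∀ t, IsProbabilityMeasure ((bpMap P m β₀)^[t] (Measure.dirac (⊤:ℝ≥0∞))) := by
    intro t
    induction t with
    | zero => rw [Function.iterate_zero_apply]; infer_instance
    | succ t ih =>
      rw [Function.iterate_succ_apply']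
      haveI := ih
      exact BPaux.isProb_bpMap hP0 hm hmpos β₀ _
  have hsupp0 : ∀ t, ∀ᵐ x ∂((bpMap P m β₀)^[t] (Measure.dirac (⊤:ℝ≥0∞))),
      ENNReal.ofReal c ≤ x := by
    intro t
    induction t with
    | zero =>
      rw [Function.iterate_zero_apply]
      rw [MeasureTheory.ae_dirac_iff
        (measurableSet_Ici : MeasurableSet (Set.Ici (ENNReal.ofReal c)))]
      exact le_top
    | succ t ih =>
      rw [Function.iterate_succ_apply']
      haveI := hprob0 t
      exact BPaux.ae_bpMap_step hPmin β₀
        (measurableSet_Ici : MeasurableSet (Set.Ici (ENNReal.ofReal c)))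
        (fun k hk u hall =>
          BPaux.sum_lower hβ₀pos (le_refl β₀) hcpos hbarC k hk u hall) _ ih
  have hν₀supp : νβ₀ (Set.Ici (ENNReal.ofReal (c/2))) = 1 :=
    BPaux.limit_supp hprob0 hνβ₀ hcpos hsupp0
  have hμIci : μ₀ (Set.Ici (ENNReal.ofReal (c/2))) = 1 := by
    refine le_antisymm prob_le_one ?_
    calc (1:ℝ≥0∞) = νβ₀ (Set.Ici (ENNReal.ofReal (c/2))) := hν₀supp.symm
      _ ≤ μ₀ (Set.Ici (ENNReal.ofReal (c/2))) := hdom _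
  have hμae : ∀ᵐ x ∂μ₀, ENNReal.ofReal (c/2) ≤ x := by
    rw [MeasureTheory.ae_iff]
    have hset : {x : ℝ≥0∞ | ¬ ENNReal.ofReal (c/2) ≤ x}
        = (Set.Ici (ENNReal.ofReal (c/2)))ᶜ := rfl
    rw [hset, MeasureTheory.measure_compl measurableSet_Ici (MeasureTheory.measure_ne_top μ₀ _),
      hμIci, MeasureTheory.measure_univ, tsub_self]
  -- ### the coupled chain
  have hprobΛ : ∀ t, IsProbabilityMeasure
      ((BPaux.bpMap2 P m β)^[t] (μ₀.prod (Measure.dirac (⊤:ℝ≥0∞)))) := by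
    intro t
    induction t with
    | zero => rw [Function.iterate_zero_apply]; infer_instance
    | succ t ih =>
      rw [Function.iterate_succ_apply']
      haveI := ih
      exact BPaux.isProb_bpMap2 hP0 hm hmpos β _
  have hfst : ∀ t, Measure.map Prod.fst
      ((BPaux.bpMap2 P m β)^[t] (μ₀.prod (Measure.dirac (⊤:ℝ≥0∞))))
      = (bpMap P m β)^[t] μ₀ := by
    intro t
    induction t with
    | zero =>
      rw [Function.iterate_zero_apply, Function.iterate_zero_apply,
        MeasureTheory.Measure.map_fst_prod]
      simp
    | succ t ih =>
      rw [Function.iterate_succ_apply', Function.iterate_succ_apply']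
      haveI := hprobΛ t
      rw [BPaux.map_fst_bpMap2 β _, ih]
  have hsnd : ∀ t, Measure.map Prod.snd
      ((BPaux.bpMap2 P m β)^[t] (μ₀.prod (Measure.dirac (⊤:ℝ≥0∞))))
      = (bpMap P m β)^[t] (Measure.dirac (⊤:ℝ≥0∞)) := by
    intro t
    induction t with
    | zero =>
      rw [Function.iterate_zero_apply, Function.iterate_zero_apply,
        MeasureTheory.Measure.map_snd_prod]
      simp
    | succ t ih =>
      rw [Function.iterate_succ_apply', Function.iterate_succ_apply']
      haveI := hprobΛ t
      rw [BPaux.map_snd_bpMap2 β _, ih]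
  -- goodness of the coupling
  have hbase : ∀ᵐ p ∂(μ₀.prod (Measure.dirac (⊤:ℝ≥0∞))), p ∈ BPaux.G0 (c/2) := by
    rw [MeasureTheory.ae_iff]
    have hsub : {p : ℝ≥0∞ × ℝ≥0∞ | ¬ p ∈ BPaux.G0 (c/2)} ⊆
        ((Set.Ici (ENNReal.ofReal (c/2)))ᶜ ×ˢ (Set.univ : Set ℝ≥0∞))
        ∪ ((Set.univ : Set ℝ≥0∞) ×ˢ ({(⊤:ℝ≥0∞)}ᶜ)) := by
      intro p hp
      simp only [Set.mem_setOf_eq, BPaux.G0, not_and_or] at hp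
      rcases hp with hp | hp
      · exact Or.inl ⟨hp, Set.mem_univ _⟩
      · exact Or.inr ⟨Set.mem_univ _, hp⟩
    apply MeasureTheory.measure_mono_null hsub
    apply MeasureTheory.measure_union_null
    · rw [MeasureTheory.Measure.prod_prod]
      have h1 : μ₀ ((Set.Ici (ENNReal.ofReal (c/2)))ᶜ) = 0 := by
        rw [MeasureTheory.measure_compl measurableSet_Ici
          (MeasureTheory.measure_ne_top μ₀ _), hμIci, MeasureTheory.measure_univ, tsub_self]
      rw [h1, zero_mul]
    · rw [MeasureTheory.Measure.prod_prod]
      have h2 : Measure.dirac (⊤:ℝ≥0∞) ({(⊤:ℝ≥0∞)}ᶜ) = 0 := by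
        rw [MeasureTheory.Measure.dirac_apply' _ (measurableSet_singleton _).compl]
        simp
      rw [h2, mul_zero]
  have hgoodΛ : ∀ t, ∀ᵐ p ∂((BPaux.bpMap2 P m β)^[t+1] (μ₀.prod (Measure.dirac (⊤:ℝ≥0∞)))),
      p ∈ BPaux.GoodSet (c/2) (R₀ * ρ^t) := by
    intro t
    induction t with
    | zero =>
      rw [zero_add, Function.iterate_one]
      simp only [pow_zero, mul_one]
      exact BPaux.ae_bpMap2_step hPmin β (BPaux.measurable_GoodSet _ _)
        (fun k hk h hg => BPaux.good_first hβ₀pos hββ₀ hc2pos hbarC2 hR k hk h hg)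
        _ hbase
    | succ t ih =>
      rw [Function.iterate_succ_apply']
      haveI := hprobΛ (t+1)
      refine BPaux.ae_bpMap2_step hPmin β (BPaux.measurable_GoodSet _ _)
        (fun k hk h hg => ?_) _ ih
      have hstep := BPaux.good_step hβ₀pos hββ₀ hc2pos hbarC2 hρkey hρ0
        (mul_nonneg hR₀0 (pow_nonneg hρ0 t)) k hk h hg
      have hrw : ρ * (R₀ * ρ^t) = R₀ * ρ^(t+1) := by ring
      rwa [hrw] at hstep
  -- ### conclusion
  intro g hg
  have hδ := hνβ g hg
  have hdiff : Filter.Tendsto (fun t =>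
      (∫ x, g x ∂((bpMap P m β)^[t] μ₀))
        - ∫ x, g x ∂((bpMap P m β)^[t] (Measure.dirac (⊤:ℝ≥0∞))))
      Filter.atTop (nhds 0) := by
    rw [Metric.tendsto_atTop]
    intro ε hε
    obtain ⟨nn, hnn⟩ := BPaux.modulus hg (half_pos hε)
    have hrpos : (0:ℝ) < 1/((nn:ℝ)+1) := by positivity
    have hpow : Filter.Tendsto (fun t : ℕ => R₀ * ρ^t) Filter.atTop (nhds 0) := by
      have h1 := (tendsto_pow_atTop_nhds_zero_of_lt_one hρ0 hρ1).const_mul R₀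
      simpa using h1
    have hev : ∀ᶠ t in Filter.atTop, R₀ * ρ^t < 1/((nn:ℝ)+1) :=
      hpow.eventually (eventually_lt_nhds hrpos)
    obtain ⟨T, hT⟩ := Filter.eventually_atTop.1 hev
    refine ⟨T+1, fun t ht => ?_⟩
    obtain ⟨s, rfl⟩ : ∃ s, t = s + 1 := ⟨t-1, by omega⟩
    have hs : T ≤ s := by omega
    haveI := hprobΛ (s+1)
    have hint1 : MeasureTheory.Integrable (fun p : ℝ≥0∞ × ℝ≥0∞ => g p.1)
        ((BPaux.bpMap2 P m β)^[s+1] (μ₀.prod (Measure.dirac (⊤:ℝ≥0∞)))) :=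
      BPaux.integrable_cont _ (hg.comp continuous_fst)
    have hint2 : MeasureTheory.Integrable (fun p : ℝ≥0∞ × ℝ≥0∞ => g p.2)
        ((BPaux.bpMap2 P m β)^[s+1] (μ₀.prod (Measure.dirac (⊤:ℝ≥0∞)))) :=
      BPaux.integrable_cont _ (hg.comp continuous_snd)
    have hb1 : ∫ x, g x ∂((bpMap P m β)^[s+1] μ₀)
        = ∫ p, g p.1 ∂((BPaux.bpMap2 P m β)^[s+1] (μ₀.prod (Measure.dirac (⊤:ℝ≥0∞)))) := by
      rw [← hfst (s+1),
        MeasureTheory.integral_map measurable_fst.aemeasurable hg.aestronglyMeasurable]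
    have hb2 : ∫ x, g x ∂((bpMap P m β)^[s+1] (Measure.dirac (⊤:ℝ≥0∞)))
        = ∫ p, g p.2 ∂((BPaux.bpMap2 P m β)^[s+1] (μ₀.prod (Measure.dirac (⊤:ℝ≥0∞)))) := by
      rw [← hsnd (s+1),
        MeasureTheory.integral_map measurable_snd.aemeasurable hg.aestronglyMeasurable]
    rw [dist_zero_right, hb1, hb2, ← MeasureTheory.integral_sub hint1 hint2]
    have hbound : ∀ᵐ p ∂((BPaux.bpMap2 P m β)^[s+1] (μ₀.prod (Measure.dirac (⊤:ℝ≥0∞)))),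
        ‖g p.1 - g p.2‖ ≤ ε/2 := by
      filter_upwards [hgoodΛ s] with p hp
      have h1 : p.1 ≤ p.2 := hp.2.1
      have h2 : p.2 ≤ ENNReal.ofReal (1 + 1/((nn:ℝ)+1)) * p.1 := by
        refine le_trans hp.2.2 (mul_le_mul_left (ENNReal.ofReal_le_ofReal ?_) _)
        have h3 := hT s hs
        linarith
      rw [Real.norm_eq_abs]
      exact (hnn p h1 h2).le
    calc ‖∫ p, (g p.1 - g p.2)
            ∂((BPaux.bpMap2 P m β)^[s+1] (μ₀.prod (Measure.dirac (⊤:ℝ≥0∞))))‖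
        ≤ ε/2 * (((BPaux.bpMap2 P m β)^[s+1]
            (μ₀.prod (Measure.dirac (⊤:ℝ≥0∞)))) Set.univ).toReal :=
          MeasureTheory.norm_integral_le_of_norm_le_const hbound
      _ = ε/2 := by
          rw [show (((BPaux.bpMap2 P m β)^[s+1] (μ₀.prod (Measure.dirac (⊤:ℝ≥0∞))))
            Set.univ) = 1 from measure_univ]
          norm_num
      _ < ε := by linarith
  have hsplit : (fun t => ∫ x, g x ∂((bpMap P m β)^[t] μ₀)) = fun t =>
      ((∫ x, g x ∂((bpMap P m β)^[t] μ₀))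
        - ∫ x, g x ∂((bpMap P m β)^[t] (Measure.dirac (⊤:ℝ≥0∞))))
      + ∫ x, g x ∂((bpMap P m β)^[t] (Measure.dirac (⊤:ℝ≥0∞))) := by
    funext t; ring
  rw [hsplit]
  simpa using hdiff.add hδ
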